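/- Let R(θ) = 400θ⁴ − 552θ³ + 169θ² + 14θ + 1. Then R(θ) > 0 for every θ ∈ (0,1). Moreover, for θ ∈ (0,1) with θ ≠ 1/2, defining Le₋(θ) = (20θ² − 13θ − 1 − √R(θ))/(2θ−1) and Le₊(θ) = (20θ² − 13θ − 1 + √R(θ))/(2θ−1), one has: Le₋(θ) > 1 if and only if θ < 1/2, and Le₊(θ) > 1 if and only if θ > (4+√22)/12. -/
import Mathlib


/-- R(θ) = 400θ⁴ − 552θ³ + 169θ² + 14θ + 1. -/
noncomputable def Rpoly (θ : ℝ) : ℝ :=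
  400 * θ ^ 4 - 552 * θ ^ 3 + 169 * θ ^ 2 + 14 * θ + 1

/-- Le₋(θ). -/
noncomputable def LeMinus (θ : ℝ) : ℝ :=
  (20 * θ ^ 2 - 13 * θ - 1 - Real.sqrt (Rpoly θ)) / (2 * θ - 1)

/-- Le₊(θ). -/
noncomputable def LePlus (θ : ℝ) : ℝ :=
  (20 * θ ^ 2 - 13 * θ - 1 + Real.sqrt (Rpoly θ)) / (2 * θ - 1)

lemma Rpos_aux (θ : ℝ) (h0 : 0 < θ) (h1 : θ < 1) : 0 < Rpoly θ := by
  unfold Rpoly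
  rcases le_or_gt θ (71/100) with h | h
  · nlinarith [sq_nonneg (20*θ^2 - 69/5*θ), mul_nonneg h0.le (sub_nonneg.mpr h)]
  · nlinarith [sq_nonneg (θ - 73/100), mul_nonneg (sub_nonneg.mpr h.le) (sub_nonneg.mpr h1.le),
      sq_nonneg (θ^2 - 69/100*θ),
      mul_nonneg (mul_nonneg (sub_nonneg.mpr h.le) (sub_nonneg.mpr h1.le)) (sq_nonneg (θ-73/100))]

lemma sqrt22_gt_two : (2 : ℝ) < Real.sqrt 22 := by
  rw [show (2:ℝ) = Real.sqrt 4 by rw [show (4:ℝ) = 2^2 by norm_num, Real.sqrt_sq (by norm_num)]]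
  exact Real.sqrt_lt_sqrt (by norm_num) (by norm_num)

set_option maxHeartbeats 1000000 in
/-- R > 0 on (0,1); for θ ∈ (0,1), θ ≠ 1/2 one has
Le₋(θ) > 1 ↔ θ < 1/2, and Le₊(θ) > 1 ↔ θ > (4+√22)/12. -/
theorem R_pos_and_Le_criteria :
    (∀ θ : ℝ, 0 < θ → θ < 1 → 0 < Rpoly θ) ∧
    (∀ θ : ℝ, 0 < θ → θ < 1 → θ ≠ 1 / 2 →
      (1 < LeMinus θ ↔ θ < 1 / 2) ∧
      (1 < LePlus θ ↔ (4 + Real.sqrt 22) / 12 < θ)) := by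
  refine ⟨Rpos_aux, ?_⟩
  intro θ h0 h1 hne
  have hR := Rpos_aux θ h0 h1
  set s := Real.sqrt (Rpoly θ) with hsdef
  have hs0 : 0 < s := Real.sqrt_pos.mpr hR
  have hs2 : s ^ 2 = 400 * θ ^ 4 - 552 * θ ^ 3 + 169 * θ ^ 2 + 14 * θ + 1 :=
    Real.sq_sqrt hR.le
  have h22 := sqrt22_gt_two
  have h22sq : (Real.sqrt 22) ^ 2 = 22 := Real.sq_sqrt (by norm_num)
  rcases lt_or_gt_of_ne hne with hlt | hgt
  · -- θ < 1/2
    have hd : 2 * θ - 1 < 0 := by linarith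
    constructor
    · constructor
      · intro _; exact hlt
      · intro _
        unfold LeMinus
        rw [lt_div_iff_of_neg hd]
        nlinarith [hs0, mul_pos h0 h0]
    · constructor
      · intro hLe
        exfalso
        unfold LePlus at hLe
        rw [lt_div_iff_of_neg hd] at hLe
        have h1' : s < 15 * θ - 20 * θ ^ 2 := by nlinarith [hLe]
        have h2' : s ^ 2 < (15 * θ - 20 * θ ^ 2) ^ 2 := by nlinarith [hs0]
        -- cubic 48θ³−56θ²+14θ+1 = (2θ−1)(24θ²−16θ−1) < 0, but both factors negative
        nlinarith [mul_pos h0 h0, mul_pos (mul_pos h0 h0) h0]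
      · intro hθ
        exfalso
        linarith
  · -- θ > 1/2
    have hd : 0 < 2 * θ - 1 := by linarith
    have h12 : 0 < 12 * θ - 4 := by linarith
    constructor
    · constructor
      · intro hLe
        exfalso
        unfold LeMinus at hLe
        rw [lt_div_iff₀ hd] at hLe
        have h1' : s < 20 * θ ^ 2 - 15 * θ := by nlinarith [hLe]
        have hpos : 0 < 20 * θ ^ 2 - 15 * θ := lt_trans hs0 h1'
        have h34 : 3 / 4 < θ := by nlinarith [mul_pos h0 h0]
        have h2' : s ^ 2 < (20 * θ ^ 2 - 15 * θ) ^ 2 := by nlinarith [hs0]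
        nlinarith [mul_pos hd (mul_pos h0 h0)]
      · intro h; exfalso; linarith
    · have key : (1 < LePlus θ) ↔ 15 * θ - 20 * θ ^ 2 < s := by
        unfold LePlus
        rw [lt_div_iff₀ hd]
        constructor <;> intro h <;> nlinarith [h]
      rw [key]
      have hsq : ((4 + Real.sqrt 22) / 12 < θ) ↔ 0 < 24 * θ ^ 2 - 16 * θ - 1 := by
        constructor
        · intro h
          have : Real.sqrt 22 < 12 * θ - 4 := by linarith
          nlinarith [this, Real.sqrt_nonneg (22:ℝ)]
        · intro h
          have h1' : 22 < (12 * θ - 4) ^ 2 := by nlinarith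
          have : Real.sqrt 22 < 12 * θ - 4 := by
            nlinarith [Real.sqrt_nonneg (22:ℝ), h22sq, h12]
          linarith
      rw [hsq]
      constructor
      · intro h
        rcases le_or_gt (15 * θ - 20 * θ ^ 2) 0 with hle | hpos
        · -- θ ≥ 3/4, so 24θ²−16θ−1 > 0
          nlinarith [mul_pos h0 h0]
        · have h2' : (15 * θ - 20 * θ ^ 2) ^ 2 < s ^ 2 :=
            pow_lt_pow_left₀ h hpos.le (by norm_num)
          have hcubic : 0 < (2 * θ - 1) * (24 * θ ^ 2 - 16 * θ - 1) := by
            nlinarith [h2']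
          have := (mul_pos_iff_of_pos_left hd).mp hcubic
          linarith
      · intro h
        have hcubic : 0 < (2 * θ - 1) * (24 * θ ^ 2 - 16 * θ - 1) := mul_pos hd h
        have h2' : (15 * θ - 20 * θ ^ 2) ^ 2 < s ^ 2 := by nlinarith [hcubic]
        exact lt_of_pow_lt_pow_left₀ 2 hs0.le h2'
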